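/- Let n ≥ 1, θ ∈ ℝ, and for φ ∈ ℝ let R_y(φ) denote the 2×2 real rotation matrix [[cos(φ/2), −sin(φ/2)], [sin(φ/2), cos(φ/2)]]. Then the Kronecker product R_y(2·2¹θ) ⊗ R_y(2·2²θ) ⊗ ⋯ ⊗ R_y(2·2ⁿθ), applied to the first standard basis vector e₀ ∈ ℝ^{2ⁿ}, yields the vector whose i-th entry (0 ≤ i ≤ 2ⁿ − 1) equals ∏_{j=1}^n cos(2^j θ)^{1−b_{ij}} · sin(2^j θ)^{b_{ij}}, where b_{i1}b_{i2}…b_{in} is the n-bit binary representation of i (b_{i1} the most significant bit); that is, the sampling circuit S(θ) = ⊗_{j=1}^n R_y(2·2^j θ) applied to the all-zeros state produces the vector x(θ) for N = 2ⁿ. -/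

import Mathlib

open Real Finset Matrix

/-- The 2×2 real rotation matrix
`R_y(φ) = [[cos(φ/2), −sin(φ/2)], [sin(φ/2), cos(φ/2)]]`. -/
noncomputable def Ry (φ : ℝ) : Matrix (Fin 2) (Fin 2) ℝ :=
  !![Real.cos (φ / 2), -Real.sin (φ / 2); Real.sin (φ / 2), Real.cos (φ / 2)]

/-- The `n`-fold Kronecker product `M 1 ⊗ M 2 ⊗ ⋯ ⊗ M n` of 2×2 matrices, as a matrix on
`Fin (2^n)`, using the big-endian index identification `Fin 2 × Fin (2^n) ≃ Fin (2^(n+1))`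
(the factor `M 1` corresponds to the most significant bit of the index). -/
noncomputable def kronFold : (n : ℕ) → (ℕ → Matrix (Fin 2) (Fin 2) ℝ) →
    Matrix (Fin (2 ^ n)) (Fin (2 ^ n)) ℝ
  | 0, _ => 1
  | n + 1, M =>
    Matrix.reindex (finProdFinEquiv.trans (finCongr (by ring)))
        (finProdFinEquiv.trans (finCongr (by ring)))
      (Matrix.kroneckerMap (· * ·) (M 1) (kronFold n (fun j => M (j + 1))))

lemma bit_mod_pow (i d n : ℕ) (h : d < n) : i % 2 ^ n / 2 ^ d % 2 = i / 2 ^ d % 2 := by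
  conv_rhs => rw [← Nat.mod_add_div i (2 ^ n)]
  have h1 : (2 : ℕ) ^ n = 2 ^ d * 2 ^ (n - d) := by rw [← pow_add]; congr 1; omega
  rw [h1, mul_assoc, Nat.add_mul_div_left _ _ (Nat.pos_of_ne_zero (by positivity))]
  have h2 : (2 : ℕ) ^ (n - d) = 2 * 2 ^ (n - d - 1) := by
    rw [← pow_succ']; congr 1; omega
  rw [h2, mul_assoc, Nat.add_mul_mod_self_left]

lemma kronFold_mulVec (n : ℕ) (M : ℕ → Matrix (Fin 2) (Fin 2) ℝ) (i : Fin (2 ^ n)) :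
    (kronFold n M).mulVec (Pi.single (0 : Fin (2 ^ n)) 1) i =
      ∏ j ∈ Finset.Icc 1 n, M j ⟨i.val / 2 ^ (n - j) % 2, Nat.mod_lt _ two_pos⟩ 0 := by
  induction n generalizing M with
  | zero =>
    have hi : i = ⟨0, by norm_num⟩ := Fin.ext (by have := i.isLt; omega)
    subst hi
    simp [kronFold, Matrix.one_apply]
  | succ n ih =>
    rw [kronFold, Matrix.reindex_apply, Matrix.submatrix_mulVec_equiv]
    set e : Fin 2 × Fin (2 ^ n) ≃ Fin (2 ^ (n + 1)) :=
      finProdFinEquiv.trans (finCongr (by ring)) with he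
    have hv : (Pi.single (0 : Fin (2 ^ (n + 1))) (1 : ℝ)) ∘ (e.symm).symm =
        Pi.single ((0 : Fin 2), (0 : Fin (2 ^ n))) 1 := by
      funext p
      simp only [Equiv.symm_symm, Function.comp_apply]
      have h0 : e ((0 : Fin 2), (0 : Fin (2 ^ n))) = 0 := by
        apply Fin.ext
        simp [he, finProdFinEquiv]
      rcases eq_or_ne p ((0 : Fin 2), (0 : Fin (2 ^ n))) with rfl | hp
      · rw [h0]; simp
      · rw [Pi.single_eq_of_ne hp, Pi.single_eq_of_ne]
        rw [← h0]
        exact fun hc => hp (e.injective hc)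
    rw [Function.comp_apply, hv, Matrix.mulVec_single_one]
    simp only [Matrix.col_apply]
    have hk : (Matrix.kroneckerMap (· * ·) (M 1) (kronFold n fun j => M (j + 1)))
        (e.symm i) ((0 : Fin 2), (0 : Fin (2 ^ n))) =
        M 1 (e.symm i).1 0 * (kronFold n fun j => M (j + 1)) (e.symm i).2 0 := rfl
    rw [hk]
    have h2 : (kronFold n fun j => M (j + 1)) (e.symm i).2 0 =
        (kronFold n fun j => M (j + 1)).mulVec (Pi.single (0 : Fin (2 ^ n)) 1) (e.symm i).2 := by
      simp
    rw [h2, ih]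
    have hfst : ((e.symm i).1 : ℕ) = i.val / 2 ^ n := by
      simp [he, finProdFinEquiv, Fin.divNat]
    have hsnd : ((e.symm i).2 : ℕ) = i.val % 2 ^ n := by
      simp [he, finProdFinEquiv, Fin.modNat]
    rw [← Finset.mul_prod_Ioc_eq_prod_Icc (show 1 ≤ n + 1 by omega)]
    congr 1
    · congr 1
      apply Fin.ext
      show ((e.symm i).1 : ℕ) = i.val / 2 ^ (n + 1 - 1) % 2
      rw [hfst]
      simp only [Nat.add_sub_cancel]
      rw [Nat.mod_eq_of_lt]
      exact Nat.div_lt_of_lt_mul (by have h := i.isLt; have hp : (2:ℕ)^(n+1) = 2^n*2 := pow_succ 2 n; omega)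
    · rw [← Finset.Icc_add_one_left_eq_Ioc]
      have hmap : Finset.Icc 2 (n + 1) = (Finset.Icc 1 n).map (addRightEmbedding 1) := by
        rw [Finset.map_add_right_Icc]
      rw [show (1 : ℕ) + 1 = 2 from rfl, hmap, Finset.prod_map]
      apply Finset.prod_congr rfl
      intro j hj
      simp only [Finset.mem_Icc] at hj
      have h1 : addRightEmbedding 1 j = j + 1 := rfl
      rw [h1]
      congr 1
      apply Fin.ext
      show ((e.symm i).2 : ℕ) / 2 ^ (n - j) % 2 = i.val / 2 ^ (n + 1 - (j + 1)) % 2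
      have hd : n + 1 - (j + 1) = n - j := by omega
      rw [hd, hsnd, bit_mod_pow _ _ _ (by omega)]


/-- For `n ≥ 1` and `θ ∈ ℝ`, the Kronecker product
`R_y(2·2¹θ) ⊗ R_y(2·2²θ) ⊗ ⋯ ⊗ R_y(2·2ⁿθ)` applied to the first standard basis vector
`e₀ ∈ ℝ^{2ⁿ}` yields the vector whose `i`-th entry equals
`∏_{j=1}^n cos(2^j θ)^{1−b_{ij}} sin(2^j θ)^{b_{ij}}`, where `b_{i1}…b_{in}` is the `n`-bit
binary representation of `i` (`b_{i1}` most significant); i.e. the sampling circuit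
`S(θ) = ⊗_{j=1}^n R_y(2·2^j θ)` applied to the all-zeros state produces `x(θ)` for `N = 2ⁿ`. -/
theorem stmt_19 (n : ℕ) (hn : 1 ≤ n) (θ : ℝ) (i : Fin (2 ^ n)) :
    (kronFold n (fun j => Ry (2 * 2 ^ j * θ))).mulVec (Pi.single (0 : Fin (2 ^ n)) 1) i =
      ∏ j ∈ Finset.Icc 1 n,
        if i.val / 2 ^ (n - j) % 2 = 1
        then Real.sin ((2 : ℝ) ^ j * θ)
        else Real.cos ((2 : ℝ) ^ j * θ) := by
  rw [kronFold_mulVec]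
  apply Finset.prod_congr rfl
  intro j hj
  have hφ : (2 : ℝ) * 2 ^ j * θ / 2 = 2 ^ j * θ := by ring
  rcases Nat.mod_two_eq_zero_or_one (i.val / 2 ^ (n - j)) with h | h
  · have hf : (⟨i.val / 2 ^ (n - j) % 2, Nat.mod_lt _ two_pos⟩ : Fin 2) = 0 := Fin.ext h
    rw [hf, if_neg (by omega)]
    simp [Ry, hφ]
  · have hf : (⟨i.val / 2 ^ (n - j) % 2, Nat.mod_lt _ two_pos⟩ : Fin 2) = 1 := Fin.ext h
    rw [hf, if_pos h]
    simp [Ry, hφ]
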